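/- Fix an impulse time sequence and consider the homogeneous impulsive system ẋ(t) = Ã(t)x(t) on the flow intervals with jumps x(t_k⁺) = J̃(k)x(t_k), where Ã is continuous, bounded and Metzler-valued and J̃(k) ≥ 0 for all k ≥ 1. Let b, d ∈ ℝ^n with b > 0 and d > 0, and suppose ξ : [t_0,∞) → ℝ^n is piecewise-C¹ along the impulse sequence and satisfies ξ̄₁ ≤ ξ(t) ≤ ξ̄₂ for all t ≥ t_0 for some vectors 0 < ξ̄₁ ≤ ξ̄₂, together with −ξ̇(t) + Ã(t)ξ(t) + b < 0 at every t in the interiors of the flow intervals and J̃(k)ξ(t_k) − ξ(t_k⁺) + d < 0 for all k ≥ 1. Set α = (min_i b_i)/(max_i (ξ̄₂)_i) and ρ = 1 − (min_i d_i)/(max_i (ξ̄₂)_i). Then ρ ∈ (0,1) and every trajectory x of the homogeneous system with x(t_0) ≥ 0 satisfies ‖x(t)‖_∞ ≤ (max_i (ξ̄₂)_i / min_i (ξ̄₁)_i) · ρ^{κ(t,t_0)} · e^{−α(t−t_0)} · ‖x(t_0)‖_∞ for all t ≥ t_0; consequently there exists M > 0 such that every trajectory of the homogeneous system satisfies ‖x(t)‖_∞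 ≤ M ρ^{κ(t,t_0)} e^{−α(t−t_0)} ‖x(t_0)‖_∞ for all t ≥ t_0. -/

import Mathlib

open Matrix Filter Set Topology

/-- A square real matrix is Metzler if all its off-diagonal entries are nonnegative. -/
def Metzler {n : ℕ} (A : Matrix (Fin n) (Fin n) ℝ) : Prop :=
  ∀ i j, i ≠ j → 0 ≤ A i j

/-- An impulse time sequence: `t 0` is the initial time `t₀`, the `t k` for `k ≥ 1` are the
impulse times; the sequence is strictly increasing and tends to infinity. -/
structure ImpulseSeq where
  t : ℕ → ℝ
  t0_nonneg : 0 ≤ t 0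
  mono : StrictMono t
  tendsto_atTop : Filter.Tendsto t Filter.atTop Filter.atTop

/-- `κ(t,s)`: the number of impulse instants `t_k`, `k ≥ 1`, with `s ≤ t_k < t`. -/
noncomputable def ImpulseSeq.kappa (σ : ImpulseSeq) (s u : ℝ) : ℕ :=
  Set.ncard {k : ℕ | 1 ≤ k ∧ s ≤ σ.t k ∧ σ.t k < u}

/-- A trajectory of the homogeneous impulsive system `ẋ = Ã(t)x`, `x(t_k⁺) = J̃(k)x(t_k)`. -/
def IsHomTrajectory {n : ℕ} (σ : ImpulseSeq)
    (At : ℝ → Matrix (Fin n) (Fin n) ℝ) (J : ℕ → Matrix (Fin n) (Fin n) ℝ)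
    (x : ℝ → Fin n → ℝ) : Prop :=
  (∀ k, ContinuousOn x (Set.Ioc (σ.t k) (σ.t (k + 1)))) ∧
  (∀ k, ∀ s ∈ Set.Ioo (σ.t k) (σ.t (k + 1)), HasDerivAt x (At s *ᵥ x s) s) ∧
  ContinuousWithinAt x (Set.Ici (σ.t 0)) (σ.t 0) ∧
  (∀ k, 1 ≤ k →
    Filter.Tendsto x (nhdsWithin (σ.t k) (Set.Ioi (σ.t k))) (nhds (J k *ᵥ x (σ.t k))))

/-- A function `f` is piecewise-C¹ along the impulse sequence, with derivative `f'` on the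
interiors of the flow intervals and right limits `fplus k = f(t_k⁺)` at the impulse times. -/
def PiecewiseC1 {n : ℕ} (σ : ImpulseSeq)
    (f f' : ℝ → Fin n → ℝ) (fplus : ℕ → Fin n → ℝ) : Prop :=
  (∀ k, ContinuousOn f (Set.Ioc (σ.t k) (σ.t (k + 1)))) ∧
  (∀ k, ∀ s ∈ Set.Ioo (σ.t k) (σ.t (k + 1)), HasDerivAt f (f' s) s) ∧
  (∀ k, ContinuousOn f' (Set.Ioo (σ.t k) (σ.t (k + 1)))) ∧
  ContinuousWithinAt f (Set.Ici (σ.t 0)) (σ.t 0) ∧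
  (∀ k, 1 ≤ k →
    Filter.Tendsto f (nhdsWithin (σ.t k) (Set.Ioi (σ.t k))) (nhds (fplus k)))

/-- Barrier lemma: if finitely many `C¹` functions start nonpositive and, whenever all of them
are nonpositive and one of them vanishes, that one has strictly negative derivative, then they
all stay nonpositive. -/
theorem barrier_max {ι : Type*} [Fintype ι] [Nonempty ι] (g g' : ι → ℝ → ℝ) {a b : ℝ}
    (cont : ∀ j, ContinuousOn (g j) (Icc a b))
    (deriv : ∀ j, ∀ z ∈ Ico a b, HasDerivAt (g j) (g' j z) z)
    (init : ∀ j, g j a ≤ 0)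
    (key : ∀ z ∈ Ico a b, (∀ j, g j z ≤ 0) → ∀ j, g j z = 0 → g' j z < 0) :
    ∀ z ∈ Icc a b, ∀ j, g j z ≤ 0 := by
  classical
  set f : ℝ → ℝ := fun t => Finset.univ.sup' Finset.univ_nonempty (fun j => g j t) with hf
  have hle : ∀ t j, g j t ≤ f t := fun t j =>
    Finset.le_sup' (fun j => g j t) (Finset.mem_univ j)
  have hex : ∀ t, ∃ j, f t = g j t := by
    intro t
    obtain ⟨j, -, hj⟩ := Finset.exists_mem_eq_sup' Finset.univ_nonempty (fun j => g j t)
    exact ⟨j, hj⟩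
  have active_ne : ∀ t, (Finset.univ.filter (fun j => g j t = f t)).Nonempty := by
    intro t
    obtain ⟨j, hj⟩ := hex t
    exact ⟨j, Finset.mem_filter.2 ⟨Finset.mem_univ j, hj.symm⟩⟩
  set F' : ℝ → ℝ := fun t =>
    (Finset.univ.filter (fun j => g j t = f t)).sup' (active_ne t) (fun j => g' j t) with hF'
  have main : ∀ ⦃z⦄, z ∈ Icc a b → f z ≤ (fun _ => (0:ℝ)) z := by
    refine image_le_of_liminf_slope_right_lt_deriv_boundary (f := f) (f' := F')
      (B := fun _ => (0:ℝ)) (B' := fun _ => (0:ℝ)) ?_ ?_ ?_ ?_ ?_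
    · exact ContinuousOn.finset_sup'_apply Finset.univ_nonempty (fun j _ => cont j)
    · intro z hz r hr
      have hev : ∀ᶠ w in 𝓝[>] z, ∀ j, g j w - f z < r * (w - z) := by
        rw [eventually_all]
        intro j
        rcases eq_or_lt_of_le (hle z j) with hact | hlt
        · -- active
          have hjz : g' j z ≤ F' z := by
            refine Finset.le_sup' (fun j => g' j z) ?_
            exact Finset.mem_filter.2 ⟨Finset.mem_univ j, hact⟩
          have hslope : Tendsto (slope (g j) z) (𝓝[>] z) (𝓝 (g' j z)) :=
            (hasDerivAt_iff_tendsto_slope.1 (deriv j z hz)).mono_left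
              (nhdsWithin_mono z fun w hw => ne_of_gt hw)
          have : ∀ᶠ w in 𝓝[>] z, slope (g j) z w < r :=
            hslope.eventually_lt_const (lt_of_le_of_lt hjz hr)
          filter_upwards [this, self_mem_nhdsWithin] with w hw hw'
          have hwz : (0:ℝ) < w - z := sub_pos.2 hw'
          rw [slope_def_field, div_lt_iff₀ hwz] at hw
          calc g j w - f z = g j w - g j z := by rw [hact]
            _ < r * (w - z) := hw
        · -- inactive
          have h1 : ContinuousAt (g j) z := (deriv j z hz).continuousAt
          have hc : Tendsto (fun w => g j w - f z - r * (w - z)) (𝓝 z)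
              (𝓝 (g j z - f z - r * (z - z))) :=
            ((h1.sub continuousAt_const).sub
              (continuousAt_const.mul (continuousAt_id.sub continuousAt_const)))
          rw [sub_self, mul_zero, sub_zero] at hc
          have := hc.eventually_lt_const (sub_neg.2 hlt)
          filter_upwards [this.filter_mono nhdsWithin_le_nhds] with w hw
          linarith
      refine ((hev.and self_mem_nhdsWithin).mono ?_).frequently
      rintro w ⟨hw, hw'⟩
      obtain ⟨j, hj⟩ := hex w
      rw [slope_def_field, div_lt_iff₀ (sub_pos.2 hw'), hj]
      exact hw j
    · simpa using Finset.sup'_le _ _ (fun j _ => init j)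
    · exact fun _ => hasDerivAt_const _ _
    · intro z hz hfz
      rw [Finset.sup'_lt_iff]
      intro j hj
      have hj' := (Finset.mem_filter.1 hj).2
      exact key z hz (fun j => (hle z j).trans hfz.le) j (by rw [hj', hfz])
  intro z hz j
  exact (hle z j).trans (main hz)

theorem kappa_self (σ : ImpulseSeq) : σ.kappa (σ.t 0) (σ.t 0) = 0 := by
  unfold ImpulseSeq.kappa
  convert Set.ncard_empty ℕ
  ext j
  simp only [mem_setOf_eq, mem_empty_iff_false, iff_false, not_and]
  intro h1 h2 h3
  exact absurd h3 (not_lt.2 h2)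

theorem kappa_interval (σ : ImpulseSeq) (k : ℕ) (u : ℝ) (h1 : σ.t k < u)
    (h2 : u ≤ σ.t (k+1)) : σ.kappa (σ.t 0) u = k := by
  unfold ImpulseSeq.kappa
  have : {j : ℕ | 1 ≤ j ∧ σ.t 0 ≤ σ.t j ∧ σ.t j < u} = ↑(Finset.Icc 1 k) := by
    ext j
    simp only [mem_setOf_eq, Finset.coe_Icc, mem_Icc]
    constructor
    · rintro ⟨hj1, -, hju⟩
      refine ⟨hj1, ?_⟩
      by_contra hjk
      push_neg at hjk
      exact absurd hju (not_lt.2 (h2.trans (σ.mono.le_iff_le.2 hjk)))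
    · rintro ⟨hj1, hjk⟩
      exact ⟨hj1, σ.mono.le_iff_le.2 (Nat.zero_le j),
        lt_of_le_of_lt (σ.mono.le_iff_le.2 hjk) h1⟩
  rw [this, Set.ncard_coe_finset, Nat.card_Icc]
  omega

set_option maxHeartbeats 2000000 in
/-- Sufficiency of a linear max-separable copositive Lyapunov certificate: quantitative
exponential decay in the sup-norm with hybrid rate `(α, ρ)`. -/
theorem max_separable_lyapunov_suff {n : ℕ} (hn : 0 < n) (σ : ImpulseSeq)
    (At : ℝ → Matrix (Fin n) (Fin n) ℝ) (J : ℕ → Matrix (Fin n) (Fin n) ℝ)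
    (hAcont : ContinuousOn At (Set.Ici 0))
    (hAb : ∃ M, ∀ t ∈ Set.Ici (0 : ℝ), ∀ i j, |At t i j| ≤ M)
    (hAM : ∀ t : ℝ, 0 ≤ t → Metzler (At t))
    (hJ : ∀ k : ℕ, 1 ≤ k → ∀ i j, 0 ≤ J k i j)
    (b d : Fin n → ℝ) (hb : ∀ i, 0 < b i) (hd : ∀ i, 0 < d i)
    (ξ ξ' : ℝ → Fin n → ℝ) (ξp : ℕ → Fin n → ℝ)
    (hpc : PiecewiseC1 σ ξ ξ' ξp)
    (ξ1 ξ2 : Fin n → ℝ) (hξ1 : ∀ i, 0 < ξ1 i) (hξ12 : ∀ i, ξ1 i ≤ ξ2 i)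
    (hbound : ∀ s : ℝ, σ.t 0 ≤ s → ∀ i, ξ1 i ≤ ξ s i ∧ ξ s i ≤ ξ2 i)
    (hflow : ∀ k, ∀ s ∈ Set.Ioo (σ.t k) (σ.t (k + 1)),
      ∀ i, (-(ξ' s) + At s *ᵥ ξ s + b) i < 0)
    (hjump : ∀ k : ℕ, 1 ≤ k → ∀ i, (J k *ᵥ ξ (σ.t k) - ξp k + d) i < 0) :
    (1 - (⨅ i, d i) / (⨆ i, ξ2 i)) ∈ Set.Ioo (0 : ℝ) 1 ∧
    (∀ x : ℝ → Fin n → ℝ, IsHomTrajectory σ At J x → (∀ i, 0 ≤ x (σ.t 0) i) →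
      ∀ s : ℝ, σ.t 0 ≤ s →
        ‖x s‖ ≤ ((⨆ i, ξ2 i) / (⨅ i, ξ1 i)) *
          ((1 - (⨅ i, d i) / (⨆ i, ξ2 i)) ^ (σ.kappa (σ.t 0) s) *
            (Real.exp (-(((⨅ i, b i) / (⨆ i, ξ2 i)) * (s - σ.t 0))) * ‖x (σ.t 0)‖))) ∧
    (∃ M : ℝ, 0 < M ∧
      ∀ x : ℝ → Fin n → ℝ, IsHomTrajectory σ At J x →
        ∀ s : ℝ, σ.t 0 ≤ s →
          ‖x s‖ ≤ M * ((1 - (⨅ i, d i) / (⨆ i, ξ2 i)) ^ (σ.kappa (σ.t 0) s) *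
            (Real.exp (-(((⨅ i, b i) / (⨆ i, ξ2 i)) * (s - σ.t 0))) * ‖x (σ.t 0)‖))) := by
  classical
  haveI : Nonempty (Fin n) := ⟨⟨0, hn⟩⟩
  set t0 := σ.t 0 with ht0
  set S1 := ⨅ i, ξ1 i with hS1
  set S2 := ⨆ i, ξ2 i with hS2
  set Db := ⨅ i, b i with hDb
  set Dd := ⨅ i, d i with hDd
  set α := Db / S2 with hα
  set ρ := 1 - Dd / S2 with hρ
  -- basic facts about the extrema
  have hS1le : ∀ i, S1 ≤ ξ1 i := fun i => ciInf_le (Finite.bddBelow_range _) i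
  have hS2ge : ∀ i, ξ2 i ≤ S2 := fun i => le_ciSup (Finite.bddAbove_range _) i
  have hDble : ∀ i, Db ≤ b i := fun i => ciInf_le (Finite.bddBelow_range _) i
  have hDdle : ∀ i, Dd ≤ d i := fun i => ciInf_le (Finite.bddBelow_range _) i
  have hS1pos : 0 < S1 := by
    obtain ⟨i, hi⟩ := exists_eq_ciInf_of_finite (f := ξ1)
    rw [hS1, ← hi]; exact hξ1 i
  have hDbpos : 0 < Db := by
    obtain ⟨i, hi⟩ := exists_eq_ciInf_of_finite (f := b)
    rw [hDb, ← hi]; exact hb i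
  have hDdpos : 0 < Dd := by
    obtain ⟨i, hi⟩ := exists_eq_ciInf_of_finite (f := d)
    rw [hDd, ← hi]; exact hd i
  have i0 : Fin n := ⟨0, hn⟩
  have hS2pos : 0 < S2 :=
    lt_of_lt_of_le (hξ1 i0) ((hξ12 i0).trans (hS2ge i0))
  have hαpos : 0 < α := div_pos hDbpos hS2pos
  have hαS2 : α * S2 = Db := div_mul_cancel₀ _ (ne_of_gt hS2pos)
  have ht0le : ∀ k, t0 ≤ σ.t k := fun k => σ.mono.le_iff_le.2 (Nat.zero_le k)
  have ht0nonneg : (0:ℝ) ≤ t0 := σ.t0_nonneg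
  -- bounds on the right limits ξp
  have hξplim : ∀ k : ℕ, 1 ≤ k → ∀ i,
      Tendsto (fun z => ξ z i) (𝓝[>] (σ.t k)) (𝓝 (ξp k i)) := by
    intro k hk i
    exact (tendsto_pi_nhds.1 (hpc.2.2.2.2 k hk)) i
  have hξp2 : ∀ k : ℕ, 1 ≤ k → ∀ i, ξp k i ≤ ξ2 i := by
    intro k hk i
    refine le_of_tendsto (hξplim k hk i) ?_
    filter_upwards [self_mem_nhdsWithin] with z hz
    exact (hbound z ((ht0le k).trans (le_of_lt hz)) i).2
  have hξp1 : ∀ k : ℕ, 1 ≤ k → ∀ i, ξ1 i ≤ ξp k i := by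
    intro k hk i
    refine ge_of_tendsto (hξplim k hk i) ?_
    filter_upwards [self_mem_nhdsWithin] with z hz
    exact (hbound z ((ht0le k).trans (le_of_lt hz)) i).1
  -- ρ ∈ (0,1)
  have hjump' : ∀ k : ℕ, 1 ≤ k → ∀ i,
      (J k *ᵥ ξ (σ.t k)) i < ξp k i - d i := by
    intro k hk i
    have := hjump k hk i
    simp only [Pi.add_apply, Pi.sub_apply] at this
    linarith
  have hJξnonneg : ∀ k : ℕ, 1 ≤ k → ∀ i, 0 ≤ (J k *ᵥ ξ (σ.t k)) i := by
    intro k hk i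
    simp only [mulVec, dotProduct]
    refine Finset.sum_nonneg fun j _ => mul_nonneg (hJ k hk i j) ?_
    exact (le_of_lt (hξ1 j)).trans (hbound (σ.t k) (ht0le k) j).1
  have hDdS2 : Dd < S2 := by
    have h1 : d i0 < ξp 1 i0 := by
      have := hjump' 1 le_rfl i0
      have h0 := hJξnonneg 1 le_rfl i0
      linarith
    exact lt_of_le_of_lt (hDdle i0) (h1.trans_le ((hξp2 1 le_rfl i0).trans (hS2ge i0)))
  have hρpos : 0 < ρ := by
    rw [hρ, sub_pos, div_lt_one hS2pos]; exact hDdS2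
  have hρlt1 : ρ < 1 := by
    rw [hρ]
    have : 0 < Dd / S2 := div_pos hDdpos hS2pos
    linarith
  -- the main quantitative estimate, for an arbitrary trajectory
  have key : ∀ x : ℝ → Fin n → ℝ, IsHomTrajectory σ At J x →
      ∀ s : ℝ, t0 ≤ s →
        ‖x s‖ ≤ (S2 / S1) * (ρ ^ (σ.kappa t0 s) *
          (Real.exp (-(α * (s - t0))) * ‖x t0‖)) := by
    intro x hx s hs
    set c := ‖x t0‖ / S1 with hc
    have hc0 : 0 ≤ c := div_nonneg (norm_nonneg _) hS1pos.le
    have hcS1 : c * S1 = ‖x t0‖ := div_mul_cancel₀ _ (ne_of_gt hS1pos)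
    have hx0 : ∀ i, |x t0 i| ≤ c * ξ t0 i := by
      intro i
      calc |x t0 i| ≤ ‖x t0‖ := by
            rw [← Real.norm_eq_abs]; exact norm_le_pi_norm (x t0) i
        _ = c * S1 := hcS1.symm
        _ ≤ c * ξ t0 i := by
            refine mul_le_mul_of_nonneg_left ((hS1le i).trans (hbound t0 le_rfl i).1) hc0
    -- the ε-padded estimate
    have Hε : ∀ ε : ℝ, 0 < ε → ∀ i,
        |x s i| ≤ (c + ε) * ρ ^ (σ.kappa t0 s) * Real.exp (-(α * (s - t0))) * ξ s i := by
      intro ε hε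
      set m : ℕ → ℝ → ℝ := fun k z => (c + ε) * ρ ^ k * Real.exp (-(α * (z - t0))) with hm
      have hm_pos : ∀ k z, 0 < m k z := fun k z =>
        mul_pos (mul_pos (by linarith) (pow_pos hρpos k)) (Real.exp_pos _)
      have hm_cont : ∀ k, Continuous (m k) := by
        intro k
        exact (continuous_const.mul
          ((continuous_const.mul (continuous_id.sub continuous_const)).neg.rexp))
      have hm_deriv : ∀ (k : ℕ) (z : ℝ), HasDerivAt (m k) (-α * m k z) z := by
        intro k z
        have h1 : HasDerivAt (fun w : ℝ => -(α * (w - t0))) (-α) z := by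
          have h0 : HasDerivAt (fun w : ℝ => α * (w - t0)) α z := by
            simpa using ((hasDerivAt_id z).sub_const t0).const_mul α
          exact h0.neg
        have h2 := h1.exp.const_mul ((c + ε) * ρ ^ k)
        refine h2.congr_deriv ?_
        simp only [hm]; ring
      have hm_succ : ∀ k z, m (k+1) z = ρ * m k z := by
        intro k z; rw [hm]; ring
      -- flow step on one interval
      have flow_step : ∀ k : ℕ,
          (∀ᶠ z in 𝓝[>] (σ.t k), ∀ i, |x z i| ≤ m k z * ξ z i) →
          ∀ z ∈ Ioc (σ.t k) (σ.t (k+1)), ∀ i, |x z i| ≤ m k z * ξ z i := by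
        intro k hstart z hz i
        rw [eventually_iff, mem_nhdsGT_iff_exists_Ioo_subset] at hstart
        obtain ⟨u, hu, huss⟩ := hstart
        by_cases hzu : z < u
        · exact huss ⟨hz.1, hzu⟩ i
        · push_neg at hzu
          obtain ⟨a', ha'⟩ := exists_between (mem_Ioi.1 hu)
          have ha'z : a' ≤ z := ha'.2.le.trans hzu
          have hIcc : Icc a' z ⊆ Ioc (σ.t k) (σ.t (k+1)) := fun w hw =>
            ⟨lt_of_lt_of_le ha'.1 hw.1, hw.2.trans hz.2⟩
          have hIco : Ico a' z ⊆ Ioo (σ.t k) (σ.t (k+1)) := fun w hw =>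
            ⟨lt_of_lt_of_le ha'.1 hw.1, lt_of_lt_of_le hw.2 hz.2⟩
          -- barrier functions indexed by (component, sign)
          set g : Fin n × Bool → ℝ → ℝ :=
            fun p w => (cond p.2 (1:ℝ) (-1)) * x w p.1 - m k w * ξ w p.1 with hg
          set g' : Fin n × Bool → ℝ → ℝ :=
            fun p w => (cond p.2 (1:ℝ) (-1)) * (At w *ᵥ x w) p.1 -
              (-α * m k w * ξ w p.1 + m k w * ξ' w p.1) with hg'
          have habs_of : ∀ w, (∀ p : Fin n × Bool, g p w ≤ 0) →
              ∀ j, |x w j| ≤ m k w * ξ w j := by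
            intro w hgw j
            have h1 := hgw (j, true)
            have h2 := hgw (j, false)
            simp only [hg, cond_true, cond_false, one_mul, neg_one_mul] at h1 h2
            rw [abs_le]; constructor <;> linarith
          have hbar : ∀ w ∈ Icc a' z, ∀ p, g p w ≤ 0 := by
            apply barrier_max g g'
            · intro p
              have hcx : ContinuousOn (fun w => x w p.1) (Icc a' z) :=
                (continuous_apply p.1).comp_continuousOn ((hx.1 k).mono hIcc)
              have hcξ : ContinuousOn (fun w => ξ w p.1) (Icc a' z) :=
                (continuous_apply p.1).comp_continuousOn ((hpc.1 k).mono hIcc)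
              exact (continuousOn_const.mul hcx).sub
                (((hm_cont k).continuousOn).mul hcξ)
            · intro p w hw
              have hw' := hIco hw
              have hdx : HasDerivAt (fun v => x v p.1) ((At w *ᵥ x w) p.1) w :=
                (hasDerivAt_pi.1 (hx.2.1 k w hw')) p.1
              have hdξ : HasDerivAt (fun v => ξ v p.1) (ξ' w p.1) w :=
                (hasDerivAt_pi.1 (hpc.2.1 k w hw')) p.1
              have := (hdx.const_mul (cond p.2 (1:ℝ) (-1))).sub
                ((hm_deriv k w).mul hdξ)
              exact this
            · intro p
              have := huss ⟨ha'.1, ha'.2⟩ p.1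
              have hsx : (cond p.2 (1:ℝ) (-1)) * x a' p.1 ≤ |x a' p.1| := by
                cases p.2 <;> simp [neg_le_abs, le_abs_self]
              simp only [hg]
              linarith [this]
            · intro w hw hall p hp0
              have hw' := hIco hw
              have hwt0 : t0 ≤ w := (ht0le k).trans hw'.1.le
              have habs := habs_of w hall
              set e := (cond p.2 (1:ℝ) (-1)) with he
              have habs_e : ∀ v : ℝ, e * v ≤ |v| := by
                rw [he]
                cases p.2 <;> intro v <;> simp [le_abs_self, neg_le_abs]
              have heq : e * x w p.1 = m k w * ξ w p.1 := by
                have h0 := hp0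
                simp only [hg] at h0
                rw [← he] at h0
                linarith [h0]
              -- derivative comparison
              have hsum : e * (At w *ᵥ x w) p.1 ≤ m k w * (At w *ᵥ ξ w) p.1 := by
                simp only [mulVec, dotProduct]
                rw [Finset.mul_sum, Finset.mul_sum]
                refine Finset.sum_le_sum fun j _ => ?_
                by_cases hij : j = p.1
                · apply le_of_eq
                  rw [hij]
                  calc e * (At w p.1 p.1 * x w p.1)
                      = At w p.1 p.1 * (e * x w p.1) := by ring
                    _ = At w p.1 p.1 * (m k w * ξ w p.1) := by rw [heq]
                    _ = m k w * (At w p.1 p.1 * ξ w p.1) := by ring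
                · have hAij : 0 ≤ At w p.1 j :=
                    hAM w (ht0nonneg.trans hwt0) p.1 j (fun h => hij h.symm)
                  have hxj : e * x w j ≤ m k w * ξ w j :=
                    (habs_e (x w j)).trans (habs j)
                  calc e * (At w p.1 j * x w j) = At w p.1 j * (e * x w j) := by ring
                    _ ≤ At w p.1 j * (m k w * ξ w j) :=
                        mul_le_mul_of_nonneg_left hxj hAij
                    _ = m k w * (At w p.1 j * ξ w j) := by ring
              have hfl : (At w *ᵥ ξ w) p.1 < ξ' w p.1 - b p.1 := by
                have := hflow k w hw' p.1
                simp only [Pi.add_apply, Pi.neg_apply] at this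
                linarith
              have hstep2 : m k w * (At w *ᵥ ξ w) p.1 <
                  m k w * ξ' w p.1 - m k w * b p.1 := by
                have := mul_lt_mul_of_pos_left hfl (hm_pos k w)
                linarith [mul_sub (m k w) (ξ' w p.1) (b p.1), this]
              have hstep3 : α * ξ w p.1 ≤ b p.1 := by
                have h1 : ξ w p.1 ≤ S2 := (hbound w hwt0 p.1).2.trans (hS2ge p.1)
                have h2 : α * ξ w p.1 ≤ α * S2 :=
                  mul_le_mul_of_nonneg_left h1 hαpos.le
                rw [hαS2] at h2
                exact h2.trans (hDble p.1)
              have hstep3' : m k w * (α * ξ w p.1) ≤ m k w * b p.1 :=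
                mul_le_mul_of_nonneg_left hstep3 (hm_pos k w).le
              simp only [hg']
              rw [← he]
              nlinarith [hsum, hstep2, hstep3']
          exact habs_of z (hbar z ⟨ha'z, le_rfl⟩) i
      -- start at t0
      have start0 : ∀ᶠ z in 𝓝[>] t0, ∀ i, |x z i| ≤ m 0 z * ξ z i := by
        rw [eventually_all]
        intro i
        have hxlim : Tendsto (fun z => x z i) (𝓝[>] t0) (𝓝 (x t0 i)) :=
          ((tendsto_pi_nhds.1 (hx.2.2.1)) i).mono_left
            (nhdsWithin_mono t0 Ioi_subset_Ici_self)
        have hξlim : Tendsto (fun z => ξ z i) (𝓝[>] t0) (𝓝 (ξ t0 i)) :=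
          ((tendsto_pi_nhds.1 (hpc.2.2.2.1)) i).mono_left
            (nhdsWithin_mono t0 Ioi_subset_Ici_self)
        have hmlim : Tendsto (fun z => m 0 z * ξ z i) (𝓝[>] t0)
            (𝓝 (m 0 t0 * ξ t0 i)) :=
          (((hm_cont 0).tendsto t0).mono_left nhdsWithin_le_nhds).mul hξlim
        have hstrict : |x t0 i| < m 0 t0 * ξ t0 i := by
          have h1 : m 0 t0 = c + ε := by
            simp [hm, sub_self]
          rw [h1]
          have h2 : c * ξ t0 i < (c + ε) * ξ t0 i := by
            have := (hξ1 i).trans_le (hbound t0 le_rfl i).1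
            nlinarith
          exact lt_of_le_of_lt (hx0 i) h2
        have := (hxlim.abs).eventually_lt hmlim hstrict
        filter_upwards [this] with z hz using hz.le
      -- jump step
      have jump_step : ∀ k : ℕ,
          (∀ z ∈ Ioc (σ.t k) (σ.t (k+1)), ∀ i, |x z i| ≤ m k z * ξ z i) →
          ∀ᶠ z in 𝓝[>] (σ.t (k+1)), ∀ i, |x z i| ≤ m (k+1) z * ξ z i := by
        intro k ih
        set tk := σ.t (k+1) with htk
        have hK : 1 ≤ k + 1 := Nat.le_add_left 1 k
        have hmem : tk ∈ Ioc (σ.t k) (σ.t (k+1)) := ⟨σ.mono (lt_add_one k), le_rfl⟩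
        have hvk : ∀ i, |x tk i| ≤ m k tk * ξ tk i := ih tk hmem
        have hstrict : ∀ i, |(J (k+1) *ᵥ x tk) i| < m (k+1) tk * ξp (k+1) i := by
          intro i
          have h1 : |(J (k+1) *ᵥ x tk) i| ≤ m k tk * (J (k+1) *ᵥ ξ tk) i := by
            simp only [mulVec, dotProduct]
            calc |∑ j, J (k+1) i j * x tk j| ≤ ∑ j, |J (k+1) i j * x tk j| :=
                  Finset.abs_sum_le_sum_abs _ _
              _ ≤ ∑ j, J (k+1) i j * (m k tk * ξ tk j) := by
                  refine Finset.sum_le_sum fun j _ => ?_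
                  rw [abs_mul, abs_of_nonneg (hJ (k+1) hK i j)]
                  exact mul_le_mul_of_nonneg_left (hvk j) (hJ (k+1) hK i j)
              _ = m k tk * ∑ j, J (k+1) i j * ξ tk j := by
                  rw [Finset.mul_sum]; exact Finset.sum_congr rfl fun j _ => by ring
          have h2 : (J (k+1) *ᵥ ξ tk) i < ξp (k+1) i - d i := hjump' (k+1) hK i
          have h3 : ξp (k+1) i - d i ≤ ρ * ξp (k+1) i := by
            have hp2 : ξp (k+1) i ≤ S2 := (hξp2 (k+1) hK i).trans (hS2ge i)
            have hp0 : 0 ≤ ξp (k+1) i := ((hξ1 i).le).trans (hξp1 (k+1) hK i)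
            have : (Dd / S2) * ξp (k+1) i ≤ Dd := by
              have := mul_le_mul_of_nonneg_left hp2 (le_of_lt (div_pos hDdpos hS2pos))
              calc (Dd / S2) * ξp (k+1) i ≤ (Dd / S2) * S2 := this
                _ = Dd := div_mul_cancel₀ _ (ne_of_gt hS2pos)
            have hdi := hDdle i
            have hexp : ρ * ξp (k+1) i = ξp (k+1) i - (Dd / S2) * ξp (k+1) i := by
              rw [hρ]; ring
            rw [hexp]
            linarith
          calc |(J (k+1) *ᵥ x tk) i| ≤ m k tk * (J (k+1) *ᵥ ξ tk) i := h1
            _ < m k tk * (ξp (k+1) i - d i) :=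
                mul_lt_mul_of_pos_left h2 (hm_pos k tk)
            _ ≤ m k tk * (ρ * ξp (k+1) i) :=
                mul_le_mul_of_nonneg_left h3 (hm_pos k tk).le
            _ = m (k+1) tk * ξp (k+1) i := by rw [hm_succ]; ring
        rw [eventually_all]
        intro i
        have hxlim : Tendsto (fun z => |x z i|) (𝓝[>] tk)
            (𝓝 |(J (k+1) *ᵥ x tk) i|) :=
          ((tendsto_pi_nhds.1 (hx.2.2.2 (k+1) hK)) i).abs
        have hmlim : Tendsto (fun z => m (k+1) z * ξ z i) (𝓝[>] tk)
            (𝓝 (m (k+1) tk * ξp (k+1) i)) :=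
          ((((hm_cont (k+1)).tendsto tk).mono_left nhdsWithin_le_nhds)).mul
            (hξplim (k+1) hK i)
        filter_upwards [hxlim.eventually_lt hmlim (hstrict i)] with z hz using hz.le
      -- induction over intervals
      have main : ∀ k : ℕ, ∀ z ∈ Ioc (σ.t k) (σ.t (k+1)), ∀ i,
          |x z i| ≤ m k z * ξ z i := by
        intro k
        induction k with
        | zero => exact flow_step 0 start0
        | succ k ihk => exact flow_step (k+1) (jump_step k ihk)
      -- conclude for the given s
      rcases eq_or_lt_of_le hs with hseq | hslt
      · intro i
        rw [← hseq, kappa_self σ, pow_zero, sub_self, mul_zero, neg_zero, Real.exp_zero]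
        have h2 : c * ξ t0 i ≤ (c + ε) * ξ t0 i := by
          have := (hξ1 i).trans_le (hbound t0 le_rfl i).1
          nlinarith
        simpa using (hx0 i).trans h2
      · have hexk : ∃ j : ℕ, s ≤ σ.t (j+1) := by
          obtain ⟨N, hN⟩ := (σ.tendsto_atTop.eventually_ge_atTop s).exists
          exact ⟨N, hN.trans (σ.mono (lt_add_one N)).le⟩
        set k := Nat.find hexk with hk
        have hk1 : s ≤ σ.t (k+1) := Nat.find_spec hexk
        have hk2 : σ.t k < s := by
          rcases Nat.eq_zero_or_pos k with h0 | hposk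
          · rw [h0, ← ht0]; exact hslt
          · have hmin := Nat.find_min hexk (show k - 1 < k by omega)
            push_neg at hmin
            have hkk : k - 1 + 1 = k := by omega
            rw [hkk] at hmin
            exact hmin
        intro i
        rw [kappa_interval σ k s hk2 hk1]
        exact main k s ⟨hk2, hk1⟩ i
    -- let ε → 0 and pass to the norm
    set K := ρ ^ (σ.kappa t0 s) * Real.exp (-(α * (s - t0))) with hK
    have hKpos : 0 < K := mul_pos (pow_pos hρpos _) (Real.exp_pos _)
    have hnorm : ∀ ε : ℝ, 0 < ε → ‖x s‖ ≤ (c + ε) * K * S2 := by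
      intro ε hε
      have hrhs : 0 ≤ (c + ε) * K * S2 :=
        mul_nonneg (mul_nonneg (by linarith) hKpos.le) hS2pos.le
      rw [pi_norm_le_iff_of_nonneg hrhs]
      intro i
      rw [Real.norm_eq_abs]
      calc |x s i| ≤ (c + ε) * ρ ^ (σ.kappa t0 s) * Real.exp (-(α * (s - t0))) * ξ s i :=
            Hε ε hε i
        _ = (c + ε) * K * ξ s i := by rw [hK]; ring
        _ ≤ (c + ε) * K * S2 := by
            refine mul_le_mul_of_nonneg_left ((hbound s hs i).2.trans (hS2ge i)) ?_
            exact mul_nonneg (by linarith) hKpos.le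
    have hfinal : ‖x s‖ ≤ c * K * S2 := by
      refine le_of_forall_pos_le_add fun δ hδ => ?_
      have hεpos : 0 < δ / (K * S2) := div_pos hδ (mul_pos hKpos hS2pos)
      have := hnorm _ hεpos
      have heq : (c + δ / (K * S2)) * K * S2 = c * K * S2 + δ := by
        field_simp
      rw [heq] at this
      exact this
    calc ‖x s‖ ≤ c * K * S2 := hfinal
      _ = (S2 / S1) * (ρ ^ (σ.kappa t0 s) * (Real.exp (-(α * (s - t0))) * ‖x t0‖)) := by
          rw [hc, hK]
          field_simp
  refine ⟨⟨hρpos, hρlt1⟩, fun x hx _ s hs => key x hx s hs,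
    ⟨S2 / S1, div_pos hS2pos hS1pos, fun x hx s hs => key x hx s hs⟩⟩
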